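/- Assume the context (two periodic Zeckendorf collections with E ⊊ Ẽ). Then φ < φ̃. Moreover there exist positive real numbers α, α̃ and a real number r < 1 such that H_n = α·φ^{n−1} + O(φ^{rn}) and H̃_n = α̃·φ̃^{n−1} + O(φ̃^{rn}) as n → ∞, and, with γ = ln φ / ln φ̃ (so 0 < γ < 1), lim_{n→∞} H_n / (H̃_n)^γ = α/α̃^γ > 0. -/

import Mathlib

open Filter Topology

namespace Zeck

-- A coefficient function is `μ : ℕ → ℕ`; index `0` is unused (members vanish there).

/-- The maximal L-block `θ^n` at index `n-1`, for `L = (e 1, …, e N)`. -/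
def maxBlock (N : ℕ) (e : ℕ → ℕ) (n : ℕ) : ℕ → ℕ :=
  fun k => if 1 ≤ k ∧ k < n then e ((n - k - 1) % N + 1) else 0

/-- A proper L-block at index `n-1` with support interval `[a, n-1]`. -/
def IsProperBlock (N : ℕ) (e : ℕ → ℕ) (ζ : ℕ → ℕ) (a n : ℕ) : Prop :=
  2 ≤ n ∧ 1 ≤ a ∧ a ≤ n - 1 ∧ (∀ j, a < j → ζ j = maxBlock N e n j) ∧
    ζ a < maxBlock N e n a ∧ (∀ j, j < a → ζ j = 0)

/-- An L-block (proper or maximal), together with its support interval. -/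
def IsBlock (N : ℕ) (e : ℕ → ℕ) (ζ : ℕ → ℕ) (I : Finset ℕ) : Prop :=
  ∃ n, 2 ≤ n ∧ ((ζ = maxBlock N e n ∧ I = Finset.Icc 1 (n - 1)) ∨
    (∃ a, IsProperBlock N e ζ a n ∧ I = Finset.Icc a (n - 1)))

/-- Membership in the periodic Zeckendorf collection for positive integers determined by L:
finite sums of L-blocks with pairwise disjoint support intervals (the zero function has `l = 0`). -/
def memColl (N : ℕ) (e : ℕ → ℕ) (μ : ℕ → ℕ) : Prop :=
  ∃ (l : ℕ) (ζ : ℕ → ℕ → ℕ) (I : ℕ → Finset ℕ),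
    (∀ i, i < l → IsBlock N e (ζ i) (I i)) ∧
    (∀ i j, i < l → j < l → i ≠ j → Disjoint (I i) (I j)) ∧
    ∀ k, μ k = ∑ i ∈ Finset.range l, ζ i k

/-- The maximal L*-block `β̄^n` at index `n`. -/
def maxStarBlock (N : ℕ) (e : ℕ → ℕ) (n : ℕ) : ℕ → ℕ :=
  fun k => if n ≤ k then e ((k - n) % N + 1) else 0

/-- A proper L*-block at index `n` with support interval `[n, b]`. -/
def IsProperStarBlock (N : ℕ) (e : ℕ → ℕ) (ζ : ℕ → ℕ) (n b : ℕ) : Prop :=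
  1 ≤ n ∧ n ≤ b ∧ (∀ j, j < b → ζ j = maxStarBlock N e n j) ∧
    ζ b < maxStarBlock N e n b ∧ (∀ j, b < j → ζ j = 0)

/-- Membership in the periodic Zeckendorf collection for `(0,1)` determined by L:
nonzero finite or infinite sums of proper L*-blocks with pairwise disjoint support intervals. -/
def memStar (N : ℕ) (e : ℕ → ℕ) (ε : ℕ → ℕ) : Prop :=
  ε ≠ 0 ∧ ∃ (l : ℕ∞) (ζ : ℕ → ℕ → ℕ) (nb : ℕ → ℕ × ℕ),
    (∀ i : ℕ, (i : ℕ∞) < l → IsProperStarBlock N e (ζ i) (nb i).1 (nb i).2) ∧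
    (∀ i j : ℕ, (i : ℕ∞) < l → (j : ℕ∞) < l → i ≠ j →
      Disjoint (Finset.Icc (nb i).1 (nb i).2) (Finset.Icc (nb j).1 (nb j).2)) ∧
    ∀ k, ε k = ∑' i : ℕ, if (i : ℕ∞) < l then ζ i k else 0

/-- A decomposition `ε = ζ^1 + … + ζ^l + μ` in which the `ζ^i` are proper L*-blocks whose
support intervals partition `[1, b]` and `μ` vanishes on `[0, b]` (`l, b` possibly infinite). -/
def DecompData (N : ℕ) (e : ℕ → ℕ) (ε : ℕ → ℕ) (l : ℕ∞) (ζ : ℕ → ℕ → ℕ)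
    (nb : ℕ → ℕ × ℕ) (b : ℕ∞) (μ : ℕ → ℕ) : Prop :=
  (∀ i : ℕ, (i : ℕ∞) < l → IsProperStarBlock N e (ζ i) (nb i).1 (nb i).2) ∧
  (∀ i j : ℕ, (i : ℕ∞) < l → (j : ℕ∞) < l → i ≠ j →
    Disjoint (Set.Icc (nb i).1 (nb i).2) (Set.Icc (nb j).1 (nb j).2)) ∧
  (⋃ i ∈ {i : ℕ | (i : ℕ∞) < l}, Set.Icc (nb i).1 (nb i).2) = {k : ℕ | 1 ≤ k ∧ (k : ℕ∞) ≤ b} ∧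
  (∀ k : ℕ, (k : ℕ∞) ≤ b → μ k = 0) ∧
  (∀ k, ε k = (∑' i : ℕ, if (i : ℕ∞) < l then ζ i k else 0) + μ k)

/-- Membership in `E̅*`. -/
def memEBar (N : ℕ) (e : ℕ → ℕ) (ε : ℕ → ℕ) : Prop :=
  memStar N e ε ∨
  ∃ (l : ℕ) (ζ : ℕ → ℕ → ℕ) (nb : ℕ → ℕ × ℕ) (b : ℕ),
    DecompData N e ε (l : ℕ∞) ζ nb (b : ℕ∞) (maxStarBlock N e (b + 1))

/-- Descending lexicographic order. -/
def dLT (a b : ℕ → ℕ) : Prop := ∃ k, a k < b k ∧ ∀ j, j < k → a j = b j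

def dLE (a b : ℕ → ℕ) : Prop := a = b ∨ dLT a b

/-- Ascending lexicographic order (on finitely supported functions). -/
def aLT (a b : ℕ → ℕ) : Prop := ∃ k, a k < b k ∧ ∀ j, k < j → a j = b j

/-- The basis coefficient function `β^b`. -/
def betaUnit (b : ℕ) : ℕ → ℕ := fun k => if k = b then 1 else 0

/-- The relation `η = rev̄(ε)`. -/
def RevBar (N : ℕ) (e : ℕ → ℕ) (ε η : ℕ → ℕ) : Prop :=
  (dLE (maxStarBlock N e 1) ε ∧ η = maxStarBlock N e 1) ∨
  (dLT ε (maxStarBlock N e 1) ∧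
    ((memStar N e ε ∧ η = ε) ∨
     ∃ (l : ℕ) (ζ : ℕ → ℕ → ℕ) (nb : ℕ → ℕ × ℕ) (b : ℕ) (μ : ℕ → ℕ),
       DecompData N e ε (l : ℕ∞) ζ nb (b : ℕ∞) μ ∧
       ((dLT (maxStarBlock N e (b + 1)) μ ∧
           η = fun k => (∑ i ∈ Finset.range l, ζ i k) + betaUnit b k) ∨
        (μ = maxStarBlock N e (b + 1) ∧ η = ε))))

/-- `Σ_k ε_k w^k` as a real number. -/
noncomputable def evalReal (ε : ℕ → ℕ) (w : ℝ) : ℝ := ∑' k : ℕ, (ε k : ℝ) * w ^ k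

/-- `Σ_k ε_k H_k` (finitely supported `ε`). -/
noncomputable def evalNat (ε H : ℕ → ℕ) : ℕ := ∑' k : ℕ, ε k * H k

/-- The counting function `z`. -/
noncomputable def zfun (N : ℕ) (e : ℕ → ℕ) (Ht : ℕ → ℕ) (x : ℕ) : ℕ :=
  Set.ncard {m : ℕ | m < x ∧ ∃ ε, memColl N e ε ∧ m = evalNat ε Ht}

/-- Characteristic polynomial of `L` for positive integers. -/
noncomputable def fchar (N : ℕ) (e : ℕ → ℕ) (x : ℝ) : ℝ :=
  x ^ N - (∑ k ∈ Finset.Ico 1 N, (e k : ℝ) * x ^ (N - k)) - (1 + (e N : ℝ))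

/-- Characteristic polynomial of `L` for `(0,1)`. -/
noncomputable def gchar (N : ℕ) (e : ℕ → ℕ) (x : ℝ) : ℝ :=
  -1 + (∑ k ∈ Finset.Ico 1 N, (e k : ℝ) * x ^ k) + (1 + (e N : ℝ)) * x ^ N

end Zeck

open Zeck Filter Asymptotics

namespace ZeckAux

open Zeck Finset

/-- The infinite periodic digit word (1-indexed): `dig N e j = e_{((j-1) mod N)+1}`. -/
def dig (N : ℕ) (e : ℕ → ℕ) (j : ℕ) : ℕ := e ((j - 1) % N + 1)

lemma maxBlock_eq_dig {N : ℕ} {e : ℕ → ℕ} {n k : ℕ} (h1 : 1 ≤ k) (h2 : k < n) :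
    maxBlock N e n k = dig N e (n - k) := by
  unfold maxBlock dig
  rw [if_pos (And.intro h1 h2)]

lemma maxBlock_eq_zero {N : ℕ} {e : ℕ → ℕ} {n k : ℕ} (h : ¬(1 ≤ k ∧ k < n)) :
    maxBlock N e n k = 0 := by
  simp only [maxBlock, if_neg h]

lemma dig_periodic (N : ℕ) (e : ℕ → ℕ) (j : ℕ) (hj : 1 ≤ j) :
    dig N e (j + N) = dig N e j := by
  unfold dig
  congr 2
  have : j + N - 1 = (j - 1) + N := by omega
  rw [this, Nat.add_mod_right]

lemma dig_eq_e {N : ℕ} (e : ℕ → ℕ) {j : ℕ} (h1 : 1 ≤ j) (h2 : j ≤ N) :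
    dig N e j = e j := by
  unfold dig
  congr 1
  have : j - 1 < N := by omega
  rw [Nat.mod_eq_of_lt this]
  omega

lemma dig_one {N : ℕ} (e : ℕ → ℕ) : dig N e 1 = e 1 := by
  unfold dig
  simp

lemma block_support {N : ℕ} {e : ℕ → ℕ} {ζ : ℕ → ℕ} {I : Finset ℕ}
    (hb : IsBlock N e ζ I) {k : ℕ} (hk : ζ k ≠ 0) : k ∈ I := by
  obtain ⟨n, hn, hcase⟩ := hb
  rcases hcase with ⟨hζ, hI⟩ | ⟨a, hprop, hI⟩
  · subst hζ hI
    by_contra hmem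
    apply hk
    apply maxBlock_eq_zero
    simp only [Finset.mem_Icc, not_and_or, not_le] at hmem
    omega
  · obtain ⟨h2n, h1a, han, hpat, hdip, hbel⟩ := hprop
    subst hI
    simp only [Finset.mem_Icc]
    constructor
    · by_contra h; push_neg at h
      exact hk (hbel k h)
    · by_contra h; push_neg at h
      have hak : a < k := by omega
      apply hk
      rw [hpat k hak]
      apply maxBlock_eq_zero
      omega

/-- Greedy necessity: a nonzero member of the collection with top index `p` matches the
maximal block `θ^{p+1}` from the top down to some index `a`, dips strictly below it at `a`,
and its truncation below `a` is again a member. -/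
lemma greedy_step {N : ℕ} {e : ℕ → ℕ} (he : 1 ≤ e 1) {μ : ℕ → ℕ} {p : ℕ}
    (hmem : memColl N e μ) (hp : μ p ≠ 0) (htop : ∀ k, p < k → μ k = 0) :
    (∀ j, 1 ≤ j → j ≤ p → μ j = maxBlock N e (p+1) j) ∨
    (∃ a, 1 ≤ a ∧ a ≤ p ∧ (∀ j, a < j → μ j = maxBlock N e (p+1) j) ∧
      μ a < maxBlock N e (p+1) a ∧ memColl N e (fun k => if k < a then μ k else 0)) := by
  obtain ⟨l, ζ, I, hbl, hdis, hsum⟩ := hmem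
  rw [hsum] at hp
  obtain ⟨i₀, hi₀l, hi₀⟩ := Finset.exists_ne_zero_of_sum_ne_zero hp
  have hi₀l' : i₀ < l := Finset.mem_range.mp hi₀l
  -- other blocks vanish on I i₀
  have hothers : ∀ i, i < l → i ≠ i₀ → ∀ k, k ∈ I i₀ → ζ i k = 0 := by
    intro i hil hne k hkI
    by_contra hz
    have hkIi : k ∈ I i := block_support (hbl i hil) hz
    have := hdis i i₀ hil hi₀l' hne
    exact (Finset.disjoint_left.mp this hkIi) hkI
  have hval : ∀ k, k ∈ I i₀ → μ k = ζ i₀ k := by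
    intro k hkI
    rw [hsum]
    apply Finset.sum_eq_single_of_mem i₀ hi₀l
    intro i hil hne
    exact hothers i (Finset.mem_range.mp hil) hne k hkI
  have hge : ∀ k, ζ i₀ k ≤ μ k := by
    intro k
    rw [hsum]
    exact Finset.single_le_sum (f := fun i => ζ i k) (fun i _ => Nat.zero_le _) hi₀l
  obtain ⟨n, hn2, hcase⟩ := hbl i₀ hi₀l'
  rcases hcase with ⟨hζeq, hI⟩ | ⟨a, hprop, hI⟩
  · -- maximal block
    left
    have hpn : 1 ≤ p ∧ p < n := by
      by_contra h
      exact hi₀ (by rw [hζeq]; exact maxBlock_eq_zero h)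
    have hnp : n = p + 1 := by
      by_contra h
      have h1 : p + 1 < n := by omega
      have h2 : μ (n-1) = 0 := htop (n-1) (by omega)
      have h3 : ζ i₀ (n-1) ≤ μ (n-1) := hge (n-1)
      rw [hζeq, maxBlock_eq_dig (by omega) (by omega)] at h3
      have : n - (n-1) = 1 := by omega
      rw [this, dig_one] at h3
      omega
    intro j hj1 hjp
    have : j ∈ I i₀ := by rw [hI, hnp]; simp only [Finset.mem_Icc]; omega
    rw [hval j this, hζeq, hnp]
  · -- proper block
    obtain ⟨h2n, h1a, han, hpat, hdip, hbel⟩ := hprop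
    have hap : a ≤ p := by
      by_contra h
      exact hi₀ (hbel p (by omega))
    have hpn1 : p < n := by
      by_contra h
      have hap' : a < p := by omega
      apply hi₀
      rw [hpat p hap']
      exact maxBlock_eq_zero (by omega)
    have hnp : n = p + 1 := by
      by_contra h
      have h1 : p + 1 < n := by omega
      have h2 : μ (n-1) = 0 := htop (n-1) (by omega)
      have h3 : ζ i₀ (n-1) ≤ μ (n-1) := hge (n-1)
      rw [hpat (n-1) (by omega), maxBlock_eq_dig (by omega) (by omega)] at h3
      have : n - (n-1) = 1 := by omega
      rw [this, dig_one] at h3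
      omega
    subst hnp
    right
    refine ⟨a, h1a, hap, ?_, ?_, ?_⟩
    · intro j haj
      by_cases hjp : j ≤ p
      · have : j ∈ I i₀ := by rw [hI]; simp only [Finset.mem_Icc]; omega
        rw [hval j this]
        exact hpat j haj
      · rw [htop j (by omega)]
        exact (maxBlock_eq_zero (by omega)).symm
    · have : a ∈ I i₀ := by rw [hI]; simp only [Finset.mem_Icc]; omega
      rw [hval a this]
      exact hdip
    · -- the truncation below a is a member
      have hl1 : 1 ≤ l := by omega
      have hoth0 : ∀ i, i < l → i ≠ i₀ → ∀ k, a ≤ k → ζ i k = 0 := by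
        intro i hil hne k hak
        by_contra hz
        have hkIi : k ∈ I i := block_support (hbl i hil) hz
        have hkp : k ≤ p := by
          by_contra hkp
          have : ζ i k ≤ μ k := by
            rw [hsum]
            exact Finset.single_le_sum (f := fun i => ζ i k) (fun i _ => Nat.zero_le _)
              (Finset.mem_range.mpr hil)
          rw [htop k (by omega)] at this
          omega
        have : k ∈ I i₀ := by rw [hI]; simp only [Finset.mem_Icc]; omega
        exact (Finset.disjoint_left.mp (hdis i i₀ hil hi₀l' hne) hkIi) this
      classical
      set σ := Equiv.swap i₀ (l-1) with hσ
      have hσmem : ∀ i, i ∈ Finset.range l → σ i ∈ Finset.range l := by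
        intro i hi
        simp only [Finset.mem_range] at hi ⊢
        by_cases h1 : i = i₀
        · rw [h1, hσ, Equiv.swap_apply_left]; omega
        · by_cases h2 : i = l-1
          · rw [h2, hσ, Equiv.swap_apply_right]; omega
          · rw [hσ, Equiv.swap_apply_of_ne_of_ne h1 h2]; omega
      refine ⟨l-1, fun i => ζ (σ i), fun i => I (σ i), ?_, ?_, ?_⟩
      · intro i hil
        have : σ i ∈ Finset.range l := hσmem i (Finset.mem_range.mpr (by omega))
        exact hbl (σ i) (Finset.mem_range.mp this)
      · intro i j hil hjl hne
        have hi' : σ i ∈ Finset.range l := hσmem i (Finset.mem_range.mpr (by omega))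
        have hj' : σ j ∈ Finset.range l := hσmem j (Finset.mem_range.mpr (by omega))
        exact hdis (σ i) (σ j) (Finset.mem_range.mp hi') (Finset.mem_range.mp hj')
          (fun h => hne (σ.injective h))
      · intro k
        have hσiff : ∀ i, i ∈ Finset.range l ↔ σ i ∈ Finset.range l := by
          intro i
          constructor
          · exact hσmem i
          · intro h
            have := hσmem (σ i) h
            rwa [show σ (σ i) = i by simp [hσ]] at this
        have hsumσ : ∑ i ∈ Finset.range l, ζ (σ i) k = ∑ i ∈ Finset.range l, ζ i k :=
          Finset.sum_equiv σ hσiff (fun i _ => rfl)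
        have hlast : σ (l-1) = i₀ := by rw [hσ, Equiv.swap_apply_right]
        have hsplit : ∑ i ∈ Finset.range l, ζ (σ i) k
            = (∑ i ∈ Finset.range (l-1), ζ (σ i) k) + ζ i₀ k := by
          have hll : l = (l-1) + 1 := by omega
          calc ∑ i ∈ Finset.range l, ζ (σ i) k
              = ∑ i ∈ Finset.range ((l-1)+1), ζ (σ i) k := by rw [← hll]
            _ = (∑ i ∈ Finset.range (l-1), ζ (σ i) k) + ζ (σ (l-1)) k :=
                Finset.sum_range_succ _ _
            _ = (∑ i ∈ Finset.range (l-1), ζ (σ i) k) + ζ i₀ k := by rw [hlast]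
        by_cases hka : k < a
        · simp only [if_pos hka]
          have : μ k = (∑ i ∈ Finset.range (l-1), ζ (σ i) k) + ζ i₀ k := by
            rw [hsum, ← hsumσ, hsplit]
          rw [this, hbel k hka, Nat.add_zero]
        · simp only [if_neg hka]
          symm
          apply Finset.sum_eq_zero
          intro i hi
          have hil : i < l - 1 := Finset.mem_range.mp hi
          have hσne : σ i ≠ i₀ := by
            intro h
            have h2 : σ (l-1) = i₀ := by rw [hσ, Equiv.swap_apply_right]
            have := σ.injective (h.trans h2.symm)
            omega
          have : σ i ∈ Finset.range l := hσmem i (Finset.mem_range.mpr (by omega))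
          exact hoth0 (σ i) (Finset.mem_range.mp this) hσne k (by omega)

end ZeckAux

namespace ZeckAux

open Zeck Finset

lemma maxBlock_mem {N : ℕ} {e : ℕ → ℕ} {n : ℕ} (hn : 2 ≤ n) :
    memColl N e (maxBlock N e n) := by
  refine ⟨1, fun _ => maxBlock N e n, fun _ => Finset.Icc 1 (n-1), ?_, ?_, ?_⟩
  · intro i _
    exact ⟨n, hn, Or.inl ⟨rfl, rfl⟩⟩
  · intro i j hi hj hne
    omega
  · intro k
    simp

lemma maxBlock_congr {N M : ℕ} {e et : ℕ → ℕ}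
    (h : ∀ j, 1 ≤ j → dig N e j = dig M et j) : maxBlock N e = maxBlock M et := by
  funext n k
  by_cases hc : 1 ≤ k ∧ k < n
  · rw [maxBlock_eq_dig hc.1 hc.2, maxBlock_eq_dig hc.1 hc.2, h (n-k) (by omega)]
  · rw [maxBlock_eq_zero hc, maxBlock_eq_zero hc]

lemma memColl_congr {N M : ℕ} {e et : ℕ → ℕ} (h : maxBlock N e = maxBlock M et) :
    memColl N e = memColl M et := by
  have hprop : IsProperBlock N e = IsProperBlock M et := by
    unfold IsProperBlock; rw [h]
  have hblock : IsBlock N e = IsBlock M et := by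
    unfold IsBlock; rw [h, hprop]
  unfold memColl; rw [hblock]

/-- The truncation of the maximal block `θ^n` keeping only indices `k` with `k + t < n`
(i.e. dropping the top `t` digits). -/
def Rfun (N : ℕ) (e : ℕ → ℕ) (n t : ℕ) : ℕ → ℕ :=
  fun k => if k + t < n then maxBlock N e n k else 0

lemma Rfun_zero (N : ℕ) (e : ℕ → ℕ) (n : ℕ) : Rfun N e n 0 = maxBlock N e n := by
  funext k
  unfold Rfun
  by_cases h : k + 0 < n
  · rw [if_pos h]
  · rw [if_neg h, maxBlock_eq_zero (by omega)]

lemma Rfun_skip {N : ℕ} {e : ℕ → ℕ} {n t : ℕ} (h0 : dig N e (t+1) = 0) :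
    Rfun N e n t = Rfun N e n (t+1) := by
  funext k
  unfold Rfun
  by_cases h1 : k + (t+1) < n
  · rw [if_pos h1, if_pos (by omega)]
  · rw [if_neg h1]
    by_cases h2 : k + t < n
    · rw [if_pos h2]
      have hk : k = n - 1 - t := by omega
      by_cases h3 : 1 ≤ k
      · rw [maxBlock_eq_dig h3 (by omega), show n - k = t + 1 by omega, h0]
      · exact maxBlock_eq_zero (by omega)
    · rw [if_neg h2]

section Step

variable {N M : ℕ} {e et : ℕ → ℕ}

/-- One step of the cut recursion: at a genuine first difference the source digit must be
strictly smaller, and the truncation below it is again a member of the larger collection. -/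
lemma good_step (het : 1 ≤ et 1) {t : ℕ}
    (hgood : ∀ n, t + 2 ≤ n → memColl M et (Rfun N e n t))
    (hex : ∃ i, 0 < i ∧ dig N e (t+i) ≠ dig M et i) :
    dig N e (t + Nat.find hex) < dig M et (Nat.find hex) ∧
    (∀ i, 1 ≤ i → i < Nat.find hex → dig N e (t+i) = dig M et i) ∧
    ∀ n, (t + Nat.find hex) + 2 ≤ n → memColl M et (Rfun N e n (t + Nat.find hex)) := by
  set i₀ := Nat.find hex with hi₀def
  have hspec := Nat.find_spec hex
  have hmin : ∀ i, 1 ≤ i → i < i₀ → dig N e (t+i) = dig M et i := by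
    intro i h1 h2
    have h := Nat.find_min hex h2
    push_neg at h
    exact h (by omega)
  have hi₀pos : 0 < i₀ := hspec.1
  by_cases h0 : dig N e (t+1) = 0
  · -- the next digit is zero; it must differ from `et 1 ≥ 1`, so `i₀ = 1`.
    have hi₀1 : i₀ = 1 := by
      have h1 : dig N e (t+1) ≠ dig M et 1 := by
        rw [h0, dig_one]; omega
      have h2 : Nat.find hex ≤ 1 := Nat.find_le ⟨by omega, h1⟩
      omega
    refine ⟨?_, ?_, ?_⟩
    · rw [hi₀1, dig_one, h0]; omega
    · intro i h1 h2; rw [hi₀1] at h2; omega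
    · intro n hn
      rw [hi₀1] at hn ⊢
      rw [← Rfun_skip h0]
      exact hgood n (by omega)
  · -- apply greedy necessity
    have key : ∀ n, (t + i₀) + 2 ≤ n →
        (dig N e (t + i₀) < dig M et i₀ ∧ memColl M et (Rfun N e n (t + i₀))) := by
      intro n hn
      set p := n - 1 - t with hp
      have hp1 : 1 ≤ p := by omega
      have hpi : i₀ + 1 ≤ p := by omega
      have hnp : n = t + p + 1 := by omega
      have hmem : memColl M et (Rfun N e n t) := hgood n (by omega)
      have hptop : Rfun N e n t p ≠ 0 := by
        unfold Rfun
        rw [if_pos (by omega), maxBlock_eq_dig hp1 (by omega),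
          show n - p = t + 1 by omega]
        exact h0
      have hzero : ∀ k, p < k → Rfun N e n t k = 0 := by
        intro k hk
        unfold Rfun
        rw [if_neg (by omega)]
      have hRval : ∀ j, 1 ≤ j → j ≤ p → Rfun N e n t j = dig N e (t + (p + 1 - j)) := by
        intro j h1 h2
        unfold Rfun
        rw [if_pos (by omega), maxBlock_eq_dig h1 (by omega)]
        congr 1
        omega
      have hMval : ∀ j, 1 ≤ j → j ≤ p → maxBlock M et (p+1) j = dig M et (p + 1 - j) := by
        intro j h1 h2
        exact maxBlock_eq_dig h1 (by omega)
      rcases greedy_step het hmem hptop hzero with hfull | ⟨a, h1a, hap, hmatch, hdip, hrem⟩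
      · -- full match is impossible since digits differ at i₀ ≤ p
        exfalso
        have hj : 1 ≤ p + 1 - i₀ ∧ p + 1 - i₀ ≤ p := by omega
        have := hfull (p + 1 - i₀) hj.1 hj.2
        rw [hRval _ hj.1 hj.2, hMval _ hj.1 hj.2,
          show p + 1 - (p + 1 - i₀) = i₀ by omega] at this
        exact hspec.2 this
      · -- the dip position must be exactly the first difference
        set ia := p + 1 - a with hia
        have hia1 : 1 ≤ ia := by omega
        have hdig : dig N e (t + ia) < dig M et ia := by
          have := hdip
          rw [hRval a h1a hap, hMval a h1a hap] at this
          exact this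
        have hle : i₀ ≤ ia := Nat.find_le ⟨by omega, by omega⟩
        have hge : ia ≤ i₀ := by
          by_contra hlt
          push_neg at hlt
          -- then i₀ < ia, so position j = p+1-i₀ > a matches, contradicting hspec
          have hj1 : a < p + 1 - i₀ := by omega
          have hj2 : p + 1 - i₀ ≤ p := by omega
          have := hmatch (p + 1 - i₀) hj1
          rw [hRval _ (by omega) hj2, hMval _ (by omega) hj2,
            show p + 1 - (p + 1 - i₀) = i₀ by omega] at this
          exact hspec.2 this
        have hiai₀ : ia = i₀ := by omega
        constructor
        · rw [← hiai₀]; exact hdig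
        · have heq : (fun k => if k < a then Rfun N e n t k else 0) = Rfun N e n (t + i₀) := by
            funext k
            by_cases hk : k < a
            · rw [if_pos hk]
              unfold Rfun
              rw [if_pos (by omega), if_pos (by omega)]
            · rw [if_neg hk]
              unfold Rfun
              rw [if_neg (by omega)]
          rw [← heq]
          exact hrem
    have hn0 : (t + i₀) + 2 ≤ t + i₀ + 2 := le_refl _
    exact ⟨(key _ hn0).1, hmin, fun n hn => (key n hn).2⟩

lemma good_zero {N : ℕ} {e et : ℕ → ℕ} {M : ℕ}
    (hsub1 : ∀ μ, memColl N e μ → memColl M et μ) :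
    ∀ n, 0 + 2 ≤ n → memColl M et (Rfun N e n 0) := by
  intro n hn
  rw [Rfun_zero]
  exact hsub1 _ (maxBlock_mem (by omega))

end Step

end ZeckAux

namespace ZeckAux

open Zeck Finset Filter

section Series

lemma dig_le_sup {N : ℕ} {e : ℕ → ℕ} (hN : 1 ≤ N) (j : ℕ) :
    dig N e j ≤ (Finset.Icc 1 N).sup e := by
  unfold dig
  apply Finset.le_sup
  simp only [Finset.mem_Icc]
  have := Nat.mod_lt (j-1) (show 0 < N by omega)
  omega

lemma summable_digs {N : ℕ} {e : ℕ → ℕ} (hN : 1 ≤ N) {y : ℝ} (h0 : 0 ≤ y) (h1 : y < 1) :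
    Summable (fun j : ℕ => (dig N e (j+1) : ℝ) * y^(j+1)) := by
  set B := (((Finset.Icc 1 N).sup e : ℕ) : ℝ) with hB
  have hBnn : 0 ≤ B := Nat.cast_nonneg _
  have hgs : Summable (fun j : ℕ => (B*y) * y^j) :=
    (summable_geometric_of_lt_one h0 h1).mul_left _
  have hnn : ∀ j : ℕ, (0:ℝ) ≤ (dig N e (j+1) : ℝ) * y^(j+1) := by
    intro j; positivity
  have hle : ∀ j : ℕ, (dig N e (j+1) : ℝ) * y^(j+1) ≤ (B*y) * y^j := by
    intro j
    have hd : (dig N e (j+1):ℝ) ≤ B := Nat.cast_le.mpr (dig_le_sup hN _)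
    calc (dig N e (j+1):ℝ) * y^(j+1) ≤ B * y^(j+1) :=
          mul_le_mul_of_nonneg_right hd (by positivity)
      _ = (B*y)*y^j := by ring
  exact Summable.of_nonneg_of_le hnn hle hgs

lemma dig_add_period {N : ℕ} {e : ℕ → ℕ} (q j : ℕ) (hj : 1 ≤ j) :
    dig N e (j + q * N) = dig N e j := by
  induction q with
  | zero => simp
  | succ q ih =>
    have : j + (q+1) * N = (j + q * N) + N := by ring
    rw [this, dig_periodic N e _ (by omega), ih]

lemma root_sum {N : ℕ} {e : ℕ → ℕ} (hN : 2 ≤ N) {φ : ℝ} (hφ : 1 < φ)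
    (hroot : fchar N e φ = 0) :
    ∑ k ∈ Finset.Icc 1 N, (e k : ℝ) * (φ⁻¹)^k = 1 - (φ⁻¹)^N := by
  have hφpos : (0:ℝ) < φ := lt_trans one_pos hφ
  have hφn : (φ:ℝ)^N ≠ 0 := by positivity
  have hNsum : ∑ k ∈ Finset.Icc 1 N, (e k:ℝ) * φ^(N-k) = φ^N - 1 := by
    have hsplit : ∑ k ∈ Finset.Icc 1 N, (e k:ℝ) * φ^(N-k)
        = (∑ k ∈ Finset.Ico 1 N, (e k:ℝ) * φ^(N-k)) + (e N:ℝ) * φ^(N-N) := by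
      rw [← Finset.Ico_add_one_right_eq_Icc, Finset.sum_Ico_succ_top (by omega)]
    rw [hsplit]
    simp only [Nat.sub_self, pow_zero, mul_one]
    unfold fchar at hroot
    linarith
  have hterm : ∀ k, k ≤ N → (φ⁻¹)^k * φ^N = φ^(N-k) := by
    intro k hk
    rw [inv_pow, pow_sub₀ φ (ne_of_gt hφpos) hk]
    ring
  apply mul_right_cancel₀ hφn
  rw [Finset.sum_mul]
  have : ∀ k ∈ Finset.Icc 1 N, (e k:ℝ) * (φ⁻¹)^k * φ^N = (e k:ℝ) * φ^(N-k) := by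
    intro k hk
    simp only [Finset.mem_Icc] at hk
    rw [mul_assoc, hterm k hk.2]
  rw [Finset.sum_congr rfl this, hNsum, sub_mul, one_mul, hterm N (le_refl N),
    Nat.sub_self, pow_zero]

lemma partial_period {N : ℕ} {e : ℕ → ℕ} (hN : 2 ≤ N) {y : ℝ}
    (hsum : ∑ k ∈ Finset.Icc 1 N, (e k:ℝ) * y^k = 1 - y^N) :
    ∀ q : ℕ, ∑ j ∈ Finset.range (q*N), (dig N e (j+1):ℝ) * y^(j+1) = 1 - y^(q*N) := by
  have hblock : ∀ q : ℕ, ∑ j ∈ Finset.range N, (dig N e (q*N + j + 1):ℝ) * y^(q*N + j + 1)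
      = y^(q*N) * (1 - y^N) := by
    intro q
    have h1 : ∀ j ∈ Finset.range N, (dig N e (q*N + j + 1):ℝ) * y^(q*N + j + 1)
        = y^(q*N) * ((e (j+1):ℝ) * y^(j+1)) := by
      intro j hj
      simp only [Finset.mem_range] at hj
      have hdig : dig N e (q*N + j + 1) = e (j+1) := by
        have : q*N + j + 1 = (j+1) + q*N := by ring
        rw [this, dig_add_period q (j+1) (by omega), dig_eq_e e (by omega) (by omega)]
      rw [hdig, pow_add]
      ring
    rw [Finset.sum_congr rfl h1, ← Finset.mul_sum]
    congr 1
    rw [← hsum]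
    rw [show ∑ k ∈ Finset.Icc 1 N, (e k:ℝ) * y^k = ∑ k ∈ Finset.Ico 1 (N+1), (e k:ℝ) * y^k
      by rw [Finset.Ico_add_one_right_eq_Icc], Finset.sum_Ico_eq_sum_range]
    simp only [Nat.add_sub_cancel]
    apply Finset.sum_congr rfl
    intro j _
    rw [Nat.add_comm 1 j]
  intro q
  induction q with
  | zero => simp
  | succ q ih =>
    have hqN : (q+1)*N = q*N + N := by ring
    rw [hqN, Finset.range_eq_Ico, ← Finset.sum_Ico_consecutive _ (Nat.zero_le (q*N)) (by omega),
      ← Finset.range_eq_Ico, ih, Finset.sum_Ico_eq_sum_range]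
    simp only [Nat.add_sub_cancel_left]
    have : ∑ j ∈ Finset.range N, (dig N e (q*N + j + 1):ℝ) * y^(q*N + j + 1)
        = y^(q*N) * (1 - y^N) := hblock q
    rw [show (∑ j ∈ Finset.range N, (dig N e (q*N + j +1):ℝ) * y^(q*N + j + 1)) =
      (∑ j ∈ Finset.range N, (dig N e (q*N + j +1):ℝ) * y^(q*N + j + 1)) from rfl] at this
    have harg : ∀ j ∈ Finset.range N, (dig N e (q*N + j + 1):ℝ) * y^(q*N + j + 1)
        = (fun i => (dig N e (i+1):ℝ) * y^(i+1)) (q*N + j) := by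
      intro j _; rfl
    calc (1 - y^(q*N)) + ∑ j ∈ Finset.range N, (dig N e (q*N + j + 1):ℝ) * y^(q*N + j +1)
        = (1 - y^(q*N)) + y^(q*N) * (1 - y^N) := by rw [hblock q]
      _ = 1 - y^(q*N + N) := by rw [pow_add]; ring

lemma hasSum_digs_root {N : ℕ} {e : ℕ → ℕ} (hN : 2 ≤ N) {φ : ℝ} (hφ : 1 < φ)
    (hroot : fchar N e φ = 0) :
    HasSum (fun j : ℕ => (dig N e (j+1):ℝ) * (φ⁻¹)^(j+1)) 1 := by
  have hφpos : (0:ℝ) < φ := lt_trans one_pos hφ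
  have hy0 : (0:ℝ) ≤ φ⁻¹ := inv_nonneg.mpr (le_of_lt hφpos)
  have hy1 : φ⁻¹ < 1 := by
    rw [inv_eq_one_div, div_lt_one hφpos]; exact hφ
  have hs := summable_digs (e := e) (by omega : 1 ≤ N) hy0 hy1
  have h1 := hs.hasSum.tendsto_sum_nat
  have hmul : Tendsto (fun q : ℕ => q * N) atTop atTop := by
    apply Filter.tendsto_atTop_atTop.mpr
    intro b
    exact ⟨b, fun a ha => le_trans ha (Nat.le_mul_of_pos_right a (by omega))⟩
  have h2 := h1.comp hmul
  have hform := partial_period hN (root_sum hN hφ hroot)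
  have h3 : Tendsto (fun q : ℕ => 1 - (φ⁻¹)^(q*N)) atTop (nhds (∑' j, (dig N e (j+1):ℝ) * (φ⁻¹)^(j+1))) := by
    have : (fun q : ℕ => 1 - (φ⁻¹)^(q*N))
        = (fun n => ∑ j ∈ Finset.range n, (dig N e (j+1):ℝ) * (φ⁻¹)^(j+1)) ∘ (fun q => q * N) := by
      funext q
      simp only [Function.comp_apply, hform q]
    rw [this]
    exact h2
  have h4 : Tendsto (fun q : ℕ => 1 - (φ⁻¹)^(q*N)) atTop (nhds 1) := by
    have h5 : Tendsto (fun q : ℕ => ((φ⁻¹)^N)^q) atTop (nhds 0) := by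
      apply tendsto_pow_atTop_nhds_zero_of_lt_one (by positivity)
      apply pow_lt_one₀ hy0 hy1 (by omega)
    have h6 : (fun q : ℕ => 1 - (φ⁻¹)^(q*N)) = fun q : ℕ => 1 - ((φ⁻¹)^N)^q := by
      funext q
      rw [← pow_mul, Nat.mul_comm]
    rw [h6]
    have := (tendsto_const_nhds (x := (1:ℝ)) (f := atTop (α := ℕ))).sub h5
    simpa using this
  have heq := tendsto_nhds_unique h3 h4
  rw [← heq]
  exact hs.hasSum

lemma prefix_bound {M : ℕ} {et : ℕ → ℕ} (hM : 2 ≤ M) (het : 1 ≤ et 1) {y : ℝ}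
    (hy0 : 0 ≤ y) (hy1 : y < 1)
    (hsum : HasSum (fun j : ℕ => (dig M et (j+1):ℝ) * y^(j+1)) 1) :
    ∀ l : ℕ, ∑ j ∈ Finset.range l, (dig M et (j+1):ℝ) * y^(j+1) ≤ 1 - y^(l+M+1) := by
  intro l
  set j' := M * (l / M + 1) with hj'
  have hA := Nat.div_add_mod l M
  have hAM := Nat.mod_lt l (show 0 < M by omega)
  have hj'l : l < j' := by
    have : M * (l / M + 1) = M * (l/M) + M := by ring
    omega
  have hj'u : j' + 1 ≤ l + M + 1 := by
    have : M * (l / M + 1) = M * (l/M) + M := by ring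
    omega
  have hdigj' : dig M et (j' + 1) = et 1 := by
    unfold dig
    congr 1
    simp [hj', Nat.mul_mod_right]
  have hnn : ∀ i, (0:ℝ) ≤ (dig M et (i+1):ℝ) * y^(i+1) := fun i => by positivity
  have hle : ∑ j ∈ insert j' (Finset.range l), (dig M et (j+1):ℝ) * y^(j+1) ≤ 1 :=
    sum_le_hasSum _ (fun i _ => hnn i) hsum
  rw [Finset.sum_insert (by simp only [Finset.mem_range]; omega)] at hle
  have hterm : y^(l+M+1) ≤ (dig M et (j'+1):ℝ) * y^(j'+1) := by
    rw [hdigj']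
    calc y^(l+M+1) ≤ y^(j'+1) := pow_le_pow_of_le_one hy0 (le_of_lt hy1) hj'u
      _ = 1 * y^(j'+1) := (one_mul _).symm
      _ ≤ (et 1:ℝ) * y^(j'+1) := by
          apply mul_le_mul_of_nonneg_right _ (by positivity)
          exact_mod_cast het
  linarith

end Series

end ZeckAux

namespace ZeckAux

open Zeck Finset Filter

lemma phi_lt {N M : ℕ} {e et : ℕ → ℕ} (hN : 2 ≤ N) (hM : 2 ≤ M)
    (he : 1 ≤ e 1) (het : 1 ≤ et 1)
    (hsub : {μ : ℕ → ℕ | memColl N e μ} ⊂ {μ | memColl M et μ})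
    {φ φt : ℝ} (hφ : 1 < φ) (hφroot : fchar N e φ = 0)
    (hφt : 1 < φt) (hφtroot : fchar M et φt = 0) : φ < φt := by
  have hsub1 : ∀ μ, memColl N e μ → memColl M et μ := fun μ h => hsub.subset h
  by_cases hne : ∃ i, 0 < i ∧ dig N e (0 + i) ≠ dig M et i
  case neg =>
    exfalso
    push_neg at hne
    apply hsub.ne
    have hd : ∀ j, 1 ≤ j → dig N e j = dig M et j := by
      intro j hj
      have := hne j (by omega)
      rwa [Nat.zero_add] at this
    have : memColl N e = memColl M et := memColl_congr (maxBlock_congr hd)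
    rw [this]
  case pos =>
  have hφtpos : (0:ℝ) < φt := lt_trans one_pos hφt
  have hφpos : (0:ℝ) < φ := lt_trans one_pos hφ
  set y := φt⁻¹ with hy
  have hypos : 0 < y := inv_pos.mpr hφtpos
  have hy0 : (0:ℝ) ≤ y := le_of_lt hypos
  have hy1 : y < 1 := by
    rw [hy, inv_eq_one_div, div_lt_one hφtpos]; exact hφt
  have hsumt : HasSum (fun j : ℕ => (dig M et (j+1):ℝ) * y^(j+1)) 1 :=
    hasSum_digs_root hM hφt hφtroot
  have hsums : HasSum (fun j : ℕ => (dig N e (j+1):ℝ) * (φ⁻¹)^(j+1)) 1 :=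
    hasSum_digs_root hN hφ hφroot
  have hpre := prefix_bound hM het hy0 hy1 hsumt
  have hpre1 : ∀ l : ℕ, ∑ j ∈ Finset.range l, (dig M et (j+1):ℝ) * y^(j+1) ≤ 1 :=
    fun l => sum_le_hasSum _ (fun i _ => by positivity) hsumt
  set g : ℕ → ℝ := fun j => (dig N e (j+1):ℝ) * y^(j+1) with hg
  have hgsum : Summable g := summable_digs (by omega : 1 ≤ N) hy0 hy1
  set U : ℕ → ℝ := fun T => ∑ j ∈ Finset.range T, g j with hUdef
  have hUsplit : ∀ t L : ℕ, U (t + L) = U t + ∑ j ∈ Finset.range L, g (t + j) :=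
    fun t L => Finset.sum_range_add g t L
  have hgval : ∀ t j : ℕ, g (t + j) = (dig N e (t+(j+1)):ℝ) * (y^t * y^(j+1)) := by
    intro t j
    rw [hg]
    simp only
    rw [show t + j + 1 = t + (j+1) by omega, pow_add]
  -- (S1) weak segment bound
  have hS1 : ∀ t L : ℕ, (∀ i, 1 ≤ i → i ≤ L → dig N e (t+i) ≤ dig M et i) →
      U (t + L) ≤ U t + y^t * (∑ j ∈ Finset.range L, (dig M et (j+1):ℝ) * y^(j+1)) := by
    intro t L hcomp
    rw [hUsplit t L, Finset.mul_sum]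
    apply add_le_add_right
    apply Finset.sum_le_sum
    intro j hj
    simp only [Finset.mem_range] at hj
    rw [hgval t j]
    calc (dig N e (t+(j+1)):ℝ) * (y^t * y^(j+1))
        ≤ (dig M et (j+1):ℝ) * (y^t * y^(j+1)) := by
          apply mul_le_mul_of_nonneg_right _ (by positivity)
          exact_mod_cast hcomp (j+1) (by omega) (by omega)
      _ = y^t * ((dig M et (j+1):ℝ) * y^(j+1)) := by ring
  -- (S2) sharp segment bound (strict dip at the end of the segment)
  have hS2 : ∀ t L : ℕ, 1 ≤ L → (∀ i, 1 ≤ i → i < L → dig N e (t+i) = dig M et i) →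
      dig N e (t+L) < dig M et L →
      U (t + L) ≤ U t + y^t * ((∑ j ∈ Finset.range L, (dig M et (j+1):ℝ) * y^(j+1)) - y^L) := by
    intro t L hL hmatch hdip
    obtain ⟨L', rfl⟩ : ∃ L', L = L'+1 := ⟨L-1, by omega⟩
    rw [hUsplit t (L'+1)]
    apply add_le_add_right
    rw [Finset.sum_range_succ, Finset.sum_range_succ]
    have h1 : ∑ j ∈ Finset.range L', g (t+j)
        = ∑ j ∈ Finset.range L', (dig M et (j+1):ℝ) * (y^t * y^(j+1)) := by
      apply Finset.sum_congr rfl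
      intro j hj
      simp only [Finset.mem_range] at hj
      rw [hgval t j, hmatch (j+1) (by omega) (by omega)]
    have h2 : g (t + L') ≤ (dig M et (L'+1):ℝ) * (y^t * y^(L'+1)) - y^t * y^(L'+1) := by
      rw [hgval t L']
      have hcast : (dig N e (t+(L'+1)):ℝ) ≤ (dig M et (L'+1):ℝ) - 1 := by
        have hh : (dig N e (t+(L'+1))) + 1 ≤ dig M et (L'+1) := hdip
        have h2 := (Nat.cast_le (α := ℝ)).mpr hh
        push_cast at h2
        linarith
      have hpp : (0:ℝ) ≤ y^t * y^(L'+1) := by positivity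
      nlinarith [hpp]
    have hfac : y^t * (∑ j ∈ Finset.range L', (dig M et (j+1):ℝ) * y^(j+1))
        = ∑ j ∈ Finset.range L', (dig M et (j+1):ℝ) * (y^t * y^(j+1)) := by
      rw [Finset.mul_sum]
      apply Finset.sum_congr rfl
      intro j _
      ring
    have hexp : y^t * ((∑ j ∈ Finset.range L', (dig M et (j+1):ℝ) * y^(j+1))
          + (dig M et (L'+1):ℝ) * y^(L'+1) - y^(L'+1))
        = y^t * (∑ j ∈ Finset.range L', (dig M et (j+1):ℝ) * y^(j+1))
          + ((dig M et (L'+1):ℝ) * (y^t * y^(L'+1)) - y^t * y^(L'+1)) := by ring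
    rw [h1, hexp, hfac]
    linarith
  -- the cut point and the error margin
  set l₀ := Nat.find hne with hl₀
  obtain ⟨hdown0, hmatch0, hgood0⟩ := good_step het (good_zero hsub1) hne
  have hl₀pos : 0 < l₀ := (Nat.find_spec hne).1
  set ε := y^(l₀+M+1) with hε
  have hεpos : 0 < ε := pow_pos hypos _
  have hε1 : ε ≤ 1 := by
    rw [hε]
    exact pow_le_one₀ hy0 (le_of_lt hy1)
  have hbase : U l₀ ≤ 1 - y^l₀ - ε := by
    have h0 := hS2 0 l₀ (by omega) hmatch0 hdown0
    rw [Nat.zero_add] at h0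
    have hU0 : U 0 = 0 := by rw [hUdef]; simp
    rw [hU0, pow_zero, one_mul] at h0
    have h1 := hpre l₀
    rw [hε]
    linarith
  -- the chase
  have hchase : ∀ k t T : ℕ, (∀ n, t + 2 ≤ n → memColl M et (Rfun N e n t)) →
      U t ≤ 1 - y^t - ε → t < T → T ≤ t + k → U T ≤ 1 - ε := by
    intro k
    induction k using Nat.strong_induction_on with
    | _ k IH =>
      intro t T hGoodt hUt htT hTk
      by_cases hex : ∃ i, 0 < i ∧ dig N e (t + i) ≠ dig M et i
      · obtain ⟨hdown, hmatch, hgood'⟩ := good_step het hGoodt hex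
        have hi₀pos : 0 < Nat.find hex := (Nat.find_spec hex).1
        set i₀ := Nat.find hex with hi₀
        have hcomp : ∀ i, 1 ≤ i → i ≤ i₀ → dig N e (t+i) ≤ dig M et i := by
          intro i h1 h2
          rcases Nat.lt_or_ge i i₀ with h|h
          · exact le_of_eq (hmatch i h1 h)
          · have : i = i₀ := by omega
            rw [this]
            exact le_of_lt hdown
        by_cases hT : T ≤ t + i₀
        · have hs1 := hS1 t (T - t) (fun i h1 h2 => hcomp i h1 (by omega))
          rw [show t + (T-t) = T by omega] at hs1
          have h2 := hpre1 (T - t)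
          have h3 : y^t * (∑ j ∈ Finset.range (T-t), (dig M et (j+1):ℝ) * y^(j+1)) ≤ y^t * 1 :=
            mul_le_mul_of_nonneg_left h2 (by positivity)
          have h4 : (0:ℝ) < y^t := by positivity
          linarith
        · push_neg at hT
          have hstep := hS2 t i₀ (by omega) hmatch hdown
          have hU' : U (t+i₀) ≤ 1 - y^(t+i₀) - ε := by
            have h2 := hpre1 i₀
            have h3 : y^t * ((∑ j ∈ Finset.range i₀, (dig M et (j+1):ℝ) * y^(j+1)) - y^i₀)
                ≤ y^t * (1 - y^i₀) :=
              mul_le_mul_of_nonneg_left (by linarith) (by positivity)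
            have h4 : y^t * (1 - y^i₀) = y^t - y^(t+i₀) := by rw [pow_add]; ring
            linarith
          exact IH (k - i₀) (by omega) (t+i₀) T hgood' hU' (by omega) (by omega)
      · push_neg at hex
        have hs1 := hS1 t (T - t) (fun i h1 _ => le_of_eq (hex i (by omega)))
        rw [show t + (T-t) = T by omega] at hs1
        have h2 := hpre1 (T - t)
        have h3 : y^t * (∑ j ∈ Finset.range (T-t), (dig M et (j+1):ℝ) * y^(j+1)) ≤ y^t * 1 :=
          mul_le_mul_of_nonneg_left h2 (by positivity)
        have h4 : (0:ℝ) < y^t := by positivity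
        linarith
  -- all partial sums are bounded away from 1
  have hallT : ∀ T : ℕ, U T ≤ 1 - ε := by
    intro T
    by_cases hT0 : T ≤ l₀
    · have hcomp : ∀ i, 1 ≤ i → i ≤ T → dig N e (0+i) ≤ dig M et i := by
        intro i h1 h2
        rcases Nat.lt_or_ge i l₀ with h|h
        · exact le_of_eq (hmatch0 i h1 h)
        · have : i = l₀ := by omega
          rw [this]
          exact le_of_lt hdown0
      have hs1 := hS1 0 T hcomp
      rw [Nat.zero_add] at hs1
      have hU0 : U 0 = 0 := by rw [hUdef]; simp
      rw [hU0, pow_zero, one_mul] at hs1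
      have h1 := hpre T
      have h2 : y^(l₀+M+1) ≤ y^(T+M+1) :=
        pow_le_pow_of_le_one hy0 (le_of_lt hy1) (by omega)
      rw [hε]
      linarith
    · have hgood0' : ∀ n, l₀ + 2 ≤ n → memColl M et (Rfun N e n l₀) := by
        intro n hn
        have := hgood0 n (by omega)
        rwa [Nat.zero_add] at this
      exact hchase T l₀ T hgood0' hbase (by omega) (by omega)
  have htsum : ∑' j, g j ≤ 1 - ε :=
    le_of_tendsto' hgsum.hasSum.tendsto_sum_nat hallT
  by_contra hcon
  push_neg at hcon
  have hyy : φ⁻¹ ≤ y := by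
    rw [hy, inv_eq_one_div, inv_eq_one_div]
    exact one_div_le_one_div_of_le hφtpos hcon
  have hterm : ∀ j : ℕ, (dig N e (j+1):ℝ) * (φ⁻¹)^(j+1) ≤ g j := by
    intro j
    rw [hg]
    apply mul_le_mul_of_nonneg_left _ (Nat.cast_nonneg _)
    exact pow_le_pow_left₀ (by positivity) hyy _
  have h1 : (1:ℝ) ≤ ∑' j, g j := by
    rw [← hsums.tsum_eq]
    exact Summable.tsum_le_tsum hterm hsums.summable hgsum
  linarith

end ZeckAux

namespace ZeckAux

open Zeck Finset Filter

section Binet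

variable {N : ℕ} {e : ℕ → ℕ} {H : ℕ → ℕ} {φ : ℝ}

lemma H_ge_one (hH1 : H 1 = 1)
    (hHrec : ∀ n, 2 ≤ n → H n = 1 + ∑ k ∈ Finset.Ico 1 n, maxBlock N e n k * H k) :
    ∀ n, 1 ≤ n → 1 ≤ H n := by
  intro n hn
  rcases Nat.lt_or_ge n 2 with h|h
  · have hn1 : n = 1 := by omega
    rw [hn1, hH1]
  · rw [hHrec n h]; omega

lemma H_rec_N (hN : 2 ≤ N) (hH1 : H 1 = 1)
    (hHrec : ∀ n, 2 ≤ n → H n = 1 + ∑ k ∈ Finset.Ico 1 n, maxBlock N e n k * H k) :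
    ∀ n, 1 ≤ n → H (n + N) = H n + ∑ j ∈ Finset.Icc 1 N, dig N e j * H (n + N - j) := by
  intro n hn
  have h1 : H (n+N) = 1 + ∑ k ∈ Finset.Ico 1 (n+N), maxBlock N e (n+N) k * H k :=
    hHrec _ (by omega)
  have hsplit : ∑ k ∈ Finset.Ico 1 (n+N), maxBlock N e (n+N) k * H k
      = (∑ k ∈ Finset.Ico 1 n, maxBlock N e (n+N) k * H k)
        + ∑ k ∈ Finset.Ico n (n+N), maxBlock N e (n+N) k * H k :=
    (Finset.sum_Ico_consecutive _ (by omega) (by omega)).symm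
  have hlow : ∀ k ∈ Finset.Ico 1 n, maxBlock N e (n+N) k * H k = maxBlock N e n k * H k := by
    intro k hk
    simp only [Finset.mem_Ico] at hk
    rw [maxBlock_eq_dig hk.1 (by omega), maxBlock_eq_dig hk.1 hk.2,
      show n + N - k = (n-k) + 1*N by omega, dig_add_period 1 (n-k) (by omega)]
  have hlowsum : 1 + ∑ k ∈ Finset.Ico 1 n, maxBlock N e n k * H k = H n := by
    rcases Nat.lt_or_ge n 2 with h|h
    · have hn1 : n = 1 := by omega
      subst hn1
      simp [hH1]
    · exact (hHrec n h).symm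
  have hhigh : ∑ k ∈ Finset.Ico n (n+N), maxBlock N e (n+N) k * H k
      = ∑ j ∈ Finset.Icc 1 N, dig N e j * H (n + N - j) := by
    have h2 : ∑ k ∈ Finset.Ico n (n+N), maxBlock N e (n+N) k * H k
        = ∑ j ∈ Finset.range ((n+N)-n), maxBlock N e (n+N) (n+j) * H (n+j) :=
      Finset.sum_Ico_eq_sum_range _ _ _
    have h3 : ∑ j ∈ Finset.Icc 1 N, dig N e j * H (n + N - j)
        = ∑ j ∈ Finset.range ((N+1)-1), dig N e (1+j) * H (n + N - (1+j)) := by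
      rw [← Finset.Ico_add_one_right_eq_Icc]
      exact Finset.sum_Ico_eq_sum_range _ _ _
    rw [h2, h3]
    simp only [Nat.add_sub_cancel_left, Nat.add_sub_cancel]
    rw [← Finset.sum_range_reflect (fun j => dig N e (1+j) * H (n + N - (1+j))) N]
    apply Finset.sum_congr rfl
    intro j hj
    simp only [Finset.mem_range] at hj
    rw [maxBlock_eq_dig (by omega) (by omega)]
    congr 2
    · omega
    · omega
  rw [h1, hsplit, Finset.sum_congr rfl hlow, hhigh, ← Nat.add_assoc, hlowsum]

set_option maxHeartbeats 2000000 in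
/-- Binet-type geometric convergence of `H n / φ^n`. -/
lemma binet (hN : 2 ≤ N) (he : 1 ≤ e 1) (hH1 : H 1 = 1)
    (hHrec : ∀ n, 2 ≤ n → H n = 1 + ∑ k ∈ Finset.Ico 1 n, maxBlock N e n k * H k)
    (hφ : 1 < φ) (hroot : fchar N e φ = 0) :
    ∃ α : ℝ, 0 < α ∧ ∃ c C : ℝ, c < 0 ∧ 0 ≤ C ∧ ∃ n₀ : ℕ,
      ∀ n, n₀ ≤ n → |(H n : ℝ) * (φ⁻¹)^n - α| ≤ C * Real.exp (c * n) := by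
  have hφpos : (0:ℝ) < φ := lt_trans one_pos hφ
  set y := φ⁻¹ with hydef
  have hypos : 0 < y := inv_pos.mpr hφpos
  have hy1 : y < 1 := by rw [hydef, inv_eq_one_div, div_lt_one hφpos]; exact hφ
  set u : ℕ → ℝ := fun n => (H n : ℝ) * y^n with hu
  have hupos : ∀ n, 1 ≤ n → 0 < u n := by
    intro n hn
    rw [hu]
    have : (1:ℝ) ≤ (H n : ℝ) := by exact_mod_cast H_ge_one hH1 hHrec n hn
    positivity
  set w : ℕ → ℝ := fun j => (dig N e j : ℝ) * y^j with hw
  have hw0 : ∀ j, 0 ≤ w j := fun j => by rw [hw]; positivity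
  have hwsum : (∑ j ∈ Finset.Icc 1 N, w j) + y^N = 1 := by
    have hr := root_sum hN hφ hroot
    have hdg : ∀ k ∈ Finset.Icc 1 N, w k = (e k:ℝ) * y^k := by
      intro k hk
      simp only [Finset.mem_Icc] at hk
      rw [hw]
      simp only
      rw [dig_eq_e e hk.1 hk.2]
    rw [Finset.sum_congr rfl hdg, hr]
    ring
  have hyNpos : 0 < y^N := by positivity
  have hw1pos : 0 < w 1 := by
    rw [hw]
    simp only [pow_one, dig_one]
    have : (1:ℝ) ≤ (e 1 : ℝ) := by exact_mod_cast he
    nlinarith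
  have hw1le : w 1 ≤ 1 := by
    have h1 : w 1 ≤ ∑ j ∈ Finset.Icc 1 N, w j :=
      Finset.single_le_sum (fun j _ => hw0 j) (by simp only [Finset.mem_Icc]; omega)
    linarith
  -- the renewal recurrence for u
  have hurec : ∀ m, N + 1 ≤ m →
      u m = y^N * u (m-N) + ∑ j ∈ Finset.Icc 1 N, w j * u (m-j) := by
    intro m hm
    have hrec := H_rec_N hN hH1 hHrec (m - N) (by omega)
    rw [show m - N + N = m by omega] at hrec
    have hrec2 : H m = H (m-N) + ∑ j ∈ Finset.Icc 1 N, dig N e j * H (m - j) := hrec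
    have hcast : (H m : ℝ) = (H (m-N):ℝ) + ∑ j ∈ Finset.Icc 1 N, (dig N e j:ℝ) * (H (m-j):ℝ) := by
      exact_mod_cast congrArg (fun z : ℕ => (z : ℝ)) hrec2
    rw [hu]
    simp only
    rw [hcast, add_mul, Finset.sum_mul]
    congr 1
    · have hyy : y^m = y^N * y^(m-N) := by
        rw [← pow_add]; congr 1; omega
      rw [hyy]; ring
    · apply Finset.sum_congr rfl
      intro j hj
      simp only [Finset.mem_Icc] at hj
      rw [hw]
      simp only
      rw [show y^m = y^j * y^(m-j) by rw [← pow_add]; congr 1; omega]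
      ring
  have hNne : (Finset.range N).Nonempty := ⟨0, by simp; omega⟩
  set MN : ℕ → ℝ := fun n => (Finset.range N).sup' hNne (fun k => u (n+k)) with hMN
  set mN : ℕ → ℝ := fun n => (Finset.range N).inf' hNne (fun k => u (n+k)) with hmN
  -- all later values stay within the window bounds
  have hW : ∀ n, N+1 ≤ n → ∀ i, n ≤ i → mN n ≤ u i ∧ u i ≤ MN n := by
    intro n hn i
    induction i using Nat.strong_induction_on with
    | _ i IH =>
      intro hi
      rcases Nat.lt_or_ge i (n+N) with hlt|hge
      · have hmem : i - n ∈ Finset.range N := by simp only [Finset.mem_range]; omega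
        have hA : mN n ≤ u (n + (i-n)) := by
          simp only [hmN]; exact Finset.inf'_le (fun k => u (n+k)) hmem
        have hB : u (n + (i-n)) ≤ MN n := by
          simp only [hMN]; exact Finset.le_sup' (fun k => u (n+k)) hmem
        rw [show n + (i-n) = i by omega] at hA hB
        exact ⟨hA, hB⟩
      · have hrec := hurec i (by omega)
        have hwin : ∀ j, 1 ≤ j → j ≤ N → mN n ≤ u (i-j) ∧ u (i-j) ≤ MN n := by
          intro j h1 h2
          exact IH (i-j) (by omega) (by omega)
        have hsum_lo : ∑ j ∈ Finset.Icc 1 N, w j * (mN n) ≤ ∑ j ∈ Finset.Icc 1 N, w j * u (i-j) := by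
          apply Finset.sum_le_sum
          intro j hj
          simp only [Finset.mem_Icc] at hj
          exact mul_le_mul_of_nonneg_left (hwin j hj.1 hj.2).1 (hw0 j)
        have hsum_hi : ∑ j ∈ Finset.Icc 1 N, w j * u (i-j) ≤ ∑ j ∈ Finset.Icc 1 N, w j * (MN n) := by
          apply Finset.sum_le_sum
          intro j hj
          simp only [Finset.mem_Icc] at hj
          exact mul_le_mul_of_nonneg_left (hwin j hj.1 hj.2).2 (hw0 j)
        have hN_lo : y^N * (mN n) ≤ y^N * u (i-N) :=
          mul_le_mul_of_nonneg_left (hwin N (by omega) (le_refl N)).1 (le_of_lt hyNpos)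
        have hN_hi : y^N * u (i-N) ≤ y^N * (MN n) :=
          mul_le_mul_of_nonneg_left (hwin N (by omega) (le_refl N)).2 (le_of_lt hyNpos)
        have hc_lo : (∑ j ∈ Finset.Icc 1 N, w j * (mN n)) + y^N * (mN n) = mN n := by
          rw [← Finset.sum_mul, ← add_mul, hwsum, one_mul]
        have hc_hi : (∑ j ∈ Finset.Icc 1 N, w j * (MN n)) + y^N * (MN n) = MN n := by
          rw [← Finset.sum_mul, ← add_mul, hwsum, one_mul]
        constructor
        · rw [hrec]; linarith
        · rw [hrec]; linarith
  -- one-step improvement bounds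
  have hstep1 : ∀ m, N+1 ≤ m → ∀ b, (∀ j, 1 ≤ j → j ≤ N → b ≤ u (m-j)) →
      b + w 1 * (u (m-1) - b) ≤ u m := by
    intro m hm b hb
    have hrec := hurec m hm
    have h1mem : (1:ℕ) ∈ Finset.Icc 1 N := by simp only [Finset.mem_Icc]; omega
    have hsplit : w 1 * u (m-1) + ∑ j ∈ (Finset.Icc 1 N).erase 1, w j * u (m-j)
        = ∑ j ∈ Finset.Icc 1 N, w j * u (m-j) :=
      Finset.add_sum_erase _ (fun j => w j * u (m-j)) h1mem
    have hsplitw : w 1 + ∑ j ∈ (Finset.Icc 1 N).erase 1, w j = ∑ j ∈ Finset.Icc 1 N, w j :=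
      Finset.add_sum_erase _ w h1mem
    have herase : ∑ j ∈ (Finset.Icc 1 N).erase 1, w j * b ≤ ∑ j ∈ (Finset.Icc 1 N).erase 1, w j * u (m-j) := by
      apply Finset.sum_le_sum
      intro j hj
      have hj' := Finset.mem_of_mem_erase hj
      simp only [Finset.mem_Icc] at hj'
      exact mul_le_mul_of_nonneg_left (hb j hj'.1 hj'.2) (hw0 j)
    have heraseb : ∑ j ∈ (Finset.Icc 1 N).erase 1, w j * b = (∑ j ∈ (Finset.Icc 1 N).erase 1, w j) * b :=
      (Finset.sum_mul _ _ _).symm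
    have hNb : y^N * b ≤ y^N * u (m-N) :=
      mul_le_mul_of_nonneg_left (hb N (by omega) (le_refl N)) (le_of_lt hyNpos)
    have hkey : (∑ j ∈ (Finset.Icc 1 N).erase 1, w j) = 1 - y^N - w 1 := by linarith
    rw [hrec, ← hsplit]
    rw [hkey] at heraseb
    nlinarith [herase, heraseb, hNb]
  have hstepN : ∀ m, N+1 ≤ m → ∀ b, (∀ j, 1 ≤ j → j ≤ N → b ≤ u (m-j)) →
      b + y^N * (u (m-N) - b) ≤ u m := by
    intro m hm b hb
    have hrec := hurec m hm
    have hsum_lo : ∑ j ∈ Finset.Icc 1 N, w j * b ≤ ∑ j ∈ Finset.Icc 1 N, w j * u (m-j) := by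
      apply Finset.sum_le_sum
      intro j hj
      simp only [Finset.mem_Icc] at hj
      exact mul_le_mul_of_nonneg_left (hb j hj.1 hj.2) (hw0 j)
    have hsumb : ∑ j ∈ Finset.Icc 1 N, w j * b = (∑ j ∈ Finset.Icc 1 N, w j) * b :=
      (Finset.sum_mul _ _ _).symm
    have hkey : (∑ j ∈ Finset.Icc 1 N, w j) = 1 - y^N := by linarith
    rw [hrec]
    rw [hkey] at hsumb
    nlinarith [hsum_lo, hsumb]
  -- dual one-step bounds
  have hstep1' : ∀ m, N+1 ≤ m → ∀ b, (∀ j, 1 ≤ j → j ≤ N → u (m-j) ≤ b) →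
      u m ≤ b - w 1 * (b - u (m-1)) := by
    intro m hm b hb
    have hrec := hurec m hm
    have h1mem : (1:ℕ) ∈ Finset.Icc 1 N := by simp only [Finset.mem_Icc]; omega
    have hsplit : w 1 * u (m-1) + ∑ j ∈ (Finset.Icc 1 N).erase 1, w j * u (m-j)
        = ∑ j ∈ Finset.Icc 1 N, w j * u (m-j) :=
      Finset.add_sum_erase _ (fun j => w j * u (m-j)) h1mem
    have hsplitw : w 1 + ∑ j ∈ (Finset.Icc 1 N).erase 1, w j = ∑ j ∈ Finset.Icc 1 N, w j :=
      Finset.add_sum_erase _ w h1mem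
    have herase : ∑ j ∈ (Finset.Icc 1 N).erase 1, w j * u (m-j) ≤ ∑ j ∈ (Finset.Icc 1 N).erase 1, w j * b := by
      apply Finset.sum_le_sum
      intro j hj
      have hj' := Finset.mem_of_mem_erase hj
      simp only [Finset.mem_Icc] at hj'
      exact mul_le_mul_of_nonneg_left (hb j hj'.1 hj'.2) (hw0 j)
    have heraseb : ∑ j ∈ (Finset.Icc 1 N).erase 1, w j * b = (∑ j ∈ (Finset.Icc 1 N).erase 1, w j) * b :=
      (Finset.sum_mul _ _ _).symm
    have hNb : y^N * u (m-N) ≤ y^N * b :=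
      mul_le_mul_of_nonneg_left (hb N (by omega) (le_refl N)) (le_of_lt hyNpos)
    have hkey : (∑ j ∈ (Finset.Icc 1 N).erase 1, w j) = 1 - y^N - w 1 := by linarith
    rw [hrec, ← hsplit]
    rw [hkey] at heraseb
    nlinarith [herase, heraseb, hNb]
  -- chains
  have hchainL : ∀ n, N+1 ≤ n → ∀ t m, n + N + t ≤ m →
      (w 1)^t * (y^N * (u (m-N-t) - mN n)) ≤ u m - mN n := by
    intro n hn t
    induction t with
    | zero =>
      intro m hm
      simp only [pow_zero, one_mul, Nat.sub_zero]
      have hb : ∀ j, 1 ≤ j → j ≤ N → mN n ≤ u (m-j) :=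
        fun j h1 h2 => (hW n hn (m-j) (by omega)).1
      have := hstepN m (by omega) (mN n) hb
      linarith
    | succ t IH =>
      intro m hm
      have hb : ∀ j, 1 ≤ j → j ≤ N → mN n ≤ u (m-j) :=
        fun j h1 h2 => (hW n hn (m-j) (by omega)).1
      have h1 := hstep1 m (by omega) (mN n) hb
      have h2 := IH (m-1) (by omega)
      rw [show m - 1 - N - t = m - N - (t+1) by omega] at h2
      have h3 : (w 1) * ((w 1)^t * (y^N * (u (m-N-(t+1)) - mN n))) ≤ (w 1) * (u (m-1) - mN n) :=
        mul_le_mul_of_nonneg_left h2 (le_of_lt hw1pos)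
      calc (w 1)^(t+1) * (y^N * (u (m-N-(t+1)) - mN n))
          = (w 1) * ((w 1)^t * (y^N * (u (m-N-(t+1)) - mN n))) := by ring
        _ ≤ (w 1) * (u (m-1) - mN n) := h3
        _ ≤ u m - mN n := by linarith
  have hchainU : ∀ n, N+1 ≤ n → ∀ t m, n + N + t ≤ m →
      (w 1)^t * (y^N * (MN n - u (m-N-t))) ≤ MN n - u m := by
    intro n hn t
    induction t with
    | zero =>
      intro m hm
      simp only [pow_zero, one_mul, Nat.sub_zero]
      have hb : ∀ j, 1 ≤ j → j ≤ N → u (m-j) ≤ MN n :=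
        fun j h1 h2 => (hW n hn (m-j) (by omega)).2
      have := hstep1' m (by omega) (MN n) hb
      -- we need the N-version dual; derive it directly
      have hrec := hurec m (by omega)
      have hsum_hi : ∑ j ∈ Finset.Icc 1 N, w j * u (m-j) ≤ ∑ j ∈ Finset.Icc 1 N, w j * (MN n) := by
        apply Finset.sum_le_sum
        intro j hj
        simp only [Finset.mem_Icc] at hj
        exact mul_le_mul_of_nonneg_left (hb j hj.1 hj.2) (hw0 j)
      have hsumb : ∑ j ∈ Finset.Icc 1 N, w j * (MN n) = (∑ j ∈ Finset.Icc 1 N, w j) * (MN n) :=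
        (Finset.sum_mul _ _ _).symm
      have hkey : (∑ j ∈ Finset.Icc 1 N, w j) = 1 - y^N := by linarith
      rw [hkey] at hsumb
      rw [hrec]
      nlinarith [hsum_hi, hsumb]
    | succ t IH =>
      intro m hm
      have hb : ∀ j, 1 ≤ j → j ≤ N → u (m-j) ≤ MN n :=
        fun j h1 h2 => (hW n hn (m-j) (by omega)).2
      have h1 := hstep1' m (by omega) (MN n) hb
      have h2 := IH (m-1) (by omega)
      rw [show m - 1 - N - t = m - N - (t+1) by omega] at h2
      have h3 : (w 1) * ((w 1)^t * (y^N * (MN n - u (m-N-(t+1))))) ≤ (w 1) * (MN n - u (m-1)) :=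
        mul_le_mul_of_nonneg_left h2 (le_of_lt hw1pos)
      calc (w 1)^(t+1) * (y^N * (MN n - u (m-N-(t+1))))
          = (w 1) * ((w 1)^t * (y^N * (MN n - u (m-N-(t+1))))) := by ring
        _ ≤ (w 1) * (MN n - u (m-1)) := h3
        _ ≤ MN n - u m := by linarith
  -- contraction constant
  set δ := (w 1)^(2*N) * y^N with hδ
  have hδpos : 0 < δ := by rw [hδ]; positivity
  have hδ4 : δ ≤ 1/4 := by
    have h1 : (w 1)^(2*N) ≤ (w 1)^1 :=
      pow_le_pow_of_le_one (le_of_lt hw1pos) hw1le (by omega)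
    have h2 : y^N ≤ 1 := pow_le_one₀ (le_of_lt hypos) (le_of_lt hy1)
    have h3 : w 1 + y^N ≤ 1 := by
      have h4 : w 1 ≤ ∑ j ∈ Finset.Icc 1 N, w j :=
        Finset.single_le_sum (fun j _ => hw0 j) (by simp only [Finset.mem_Icc]; omega)
      linarith
    have h5 : δ ≤ (w 1) * y^N := by
      rw [hδ]
      apply mul_le_mul_of_nonneg_right _ (by positivity)
      simpa using h1
    nlinarith [sq_nonneg (w 1 - y^N), hyNpos, hw1pos]
  have hoscnn : ∀ n, N+1 ≤ n → mN n ≤ MN n := by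
    intro n hn
    have := hW n hn n (le_refl n)
    linarith
  -- contraction over a double window
  have hcontr : ∀ n, N+1 ≤ n → MN (n+2*N) - mN (n+2*N) ≤ (1 - 2*δ) * (MN n - mN n) := by
    intro n hn
    obtain ⟨kM, hkMmem, hkMeq⟩ := Finset.exists_mem_eq_sup' hNne (fun k => u (n+k))
    obtain ⟨km, hkmmem, hkmeq⟩ := Finset.exists_mem_eq_inf' hNne (fun k => u (n+k))
    simp only [Finset.mem_range] at hkMmem hkmmem
    have hosc : mN n ≤ MN n := hoscnn n hn
    have hXnn : 0 ≤ y^N * (MN n - mN n) :=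
      mul_nonneg (by positivity) (by linarith)
    have hbndL : ∀ k, k < N → mN n + δ * (MN n - mN n) ≤ u (n+2*N+k) := by
      intro k hk
      have ht : n + N + (N + k - kM) ≤ n+2*N+k := by omega
      have hc := hchainL n hn (N + k - kM) (n+2*N+k) ht
      rw [show n+2*N+k - N - (N + k - kM) = n + kM by omega] at hc
      have hval : u (n+kM) = MN n := by rw [hMN]; exact hkMeq.symm
      rw [hval] at hc
      have hmono : (w 1)^(2*N) ≤ (w 1)^(N + k - kM) :=
        pow_le_pow_of_le_one (le_of_lt hw1pos) hw1le (by omega)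
      have h6 : (w 1)^(2*N) * (y^N * (MN n - mN n)) ≤ (w 1)^(N+k-kM) * (y^N * (MN n - mN n)) :=
        mul_le_mul_of_nonneg_right hmono hXnn
      have hδeq : δ * (MN n - mN n) = (w 1)^(2*N) * (y^N * (MN n - mN n)) := by
        rw [hδ]; ring
      linarith
    have hbndU : ∀ k, k < N → u (n+2*N+k) ≤ MN n - δ * (MN n - mN n) := by
      intro k hk
      have ht : n + N + (N + k - km) ≤ n+2*N+k := by omega
      have hc := hchainU n hn (N + k - km) (n+2*N+k) ht
      rw [show n+2*N+k - N - (N + k - km) = n + km by omega] at hc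
      have hval : u (n+km) = mN n := by rw [hmN]; exact hkmeq.symm
      rw [hval] at hc
      have hmono : (w 1)^(2*N) ≤ (w 1)^(N + k - km) :=
        pow_le_pow_of_le_one (le_of_lt hw1pos) hw1le (by omega)
      have h6 : (w 1)^(2*N) * (y^N * (MN n - mN n)) ≤ (w 1)^(N+k-km) * (y^N * (MN n - mN n)) :=
        mul_le_mul_of_nonneg_right hmono hXnn
      have hδeq : δ * (MN n - mN n) = (w 1)^(2*N) * (y^N * (MN n - mN n)) := by
        rw [hδ]; ring
      linarith
    have hMle : MN (n+2*N) ≤ MN n - δ * (MN n - mN n) := by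
      simp only [hMN]
      apply Finset.sup'_le
      intro k hk
      simp only [Finset.mem_range] at hk
      exact hbndU k hk
    have hmge : mN n + δ * (MN n - mN n) ≤ mN (n+2*N) := by
      simp only [hmN]
      apply Finset.le_inf'
      intro k hk
      simp only [Finset.mem_range] at hk
      exact hbndL k hk
    linarith
  set ρ := 1 - 2*δ with hρdef
  have hρ0 : 0 < ρ := by rw [hρdef]; linarith
  have hρ1 : ρ < 1 := by rw [hρdef]; linarith
  set n₀ := N+1 with hn₀
  -- monotone windows
  have hwinmono : ∀ n, N+1 ≤ n → ∀ m, n ≤ m → MN m ≤ MN n ∧ mN n ≤ mN m := by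
    intro n hn m hm
    constructor
    · simp only [hMN]
      apply Finset.sup'_le
      intro k hk
      exact (hW n hn (m+k) (by omega)).2
    · simp only [hmN]
      apply Finset.le_inf'
      intro k hk
      exact (hW n hn (m+k) (by omega)).1
  have hgeo : ∀ s : ℕ, MN (n₀ + 2*N*s) - mN (n₀+2*N*s) ≤ ρ^s * (MN n₀ - mN n₀) := by
    intro s
    induction s with
    | zero => simp
    | succ s IH =>
      have h1 := hcontr (n₀+2*N*s) (by omega)
      have h2 : n₀ + 2*N*(s+1) = (n₀+2*N*s)+2*N := by ring
      rw [h2]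
      have h3 : (1-2*δ) * (MN (n₀+2*N*s) - mN (n₀+2*N*s)) ≤ ρ * (ρ^s * (MN n₀ - mN n₀)) := by
        rw [← hρdef]
        exact mul_le_mul_of_nonneg_left IH (le_of_lt hρ0)
      calc MN ((n₀+2*N*s)+2*N) - mN ((n₀+2*N*s)+2*N)
          ≤ (1-2*δ) * (MN (n₀+2*N*s) - mN (n₀+2*N*s)) := h1
        _ ≤ ρ * (ρ^s * (MN n₀ - mN n₀)) := h3
        _ = ρ^(s+1) * (MN n₀ - mN n₀) := by ring
  have hBdd : BddAbove (Set.range (fun s : ℕ => mN (n₀ + s))) := by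
    refine ⟨MN n₀, ?_⟩
    rintro x ⟨s, rfl⟩
    have h1 : mN (n₀+s) ≤ u (n₀+s) := (hW (n₀+s) (by omega) (n₀+s) (le_refl _)).1
    have h2 : u (n₀+s) ≤ MN n₀ := (hW n₀ (by omega) (n₀+s) (by omega)).2
    simp only
    linarith
  set α := ⨆ s : ℕ, mN (n₀ + s) with hα
  have hαlb : ∀ j, n₀ ≤ j → mN j ≤ α := by
    intro j hj
    have h1 : mN j = mN (n₀ + (j - n₀)) := by congr 1; omega
    rw [h1, hα]
    exact le_ciSup hBdd (j - n₀)
  have hαub : ∀ j, n₀ ≤ j → α ≤ MN j := by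
    intro j hj
    rw [hα]
    apply ciSup_le
    intro s
    rcases Nat.lt_or_ge (n₀+s) j with h|h
    · have h1 := (hwinmono (n₀+s) (by omega) j (by omega)).2
      have h2 : mN j ≤ u j := (hW j (by omega) j (le_refl _)).1
      have h3 : u j ≤ MN j := (hW j (by omega) j (le_refl _)).2
      linarith
    · have h1 : mN (n₀+s) ≤ u (n₀+s) := (hW (n₀+s) (by omega) _ (le_refl _)).1
      have h2 : u (n₀+s) ≤ MN j := (hW j (by omega) (n₀+s) h).2
      linarith
  have hαpos : 0 < α := by
    have h1 : 0 < mN n₀ := by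
      simp only [hmN]
      rw [Finset.lt_inf'_iff]
      intro b hb
      exact hupos (n₀+b) (by omega)
    have h2 := hαlb n₀ (le_refl _)
    linarith
  have hdist : ∀ j, n₀ ≤ j → |u j - α| ≤ ρ^((j - n₀)/(2*N)) * (MN n₀ - mN n₀) := by
    intro j hj
    set s := (j - n₀)/(2*N) with hs
    have h1 : s * (2*N) ≤ j - n₀ := Nat.div_mul_le_self (j - n₀) (2*N)
    have h3 : 2*N*s ≤ j - n₀ := by rw [Nat.mul_comm]; exact h1
    have hsle : n₀ + 2*N*s ≤ j := by
      have := Nat.add_le_add_left h3 n₀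
      rwa [Nat.add_sub_cancel' hj] at this
    have h4a := (hwinmono (n₀+2*N*s) (by omega) j hsle).1
    have h4b := (hwinmono (n₀+2*N*s) (by omega) j hsle).2
    have h5 := hgeo s
    have h6a : mN j ≤ u j := (hW j (by omega) j (le_refl _)).1
    have h6b : u j ≤ MN j := (hW j (by omega) j (le_refl _)).2
    have h7 := hαlb j hj
    have h8 := hαub j hj
    apply abs_le.mpr
    constructor
    · linarith
    · linarith
  -- convert to an exponential bound
  set L := Real.log ρ with hL
  have hLneg : L < 0 := Real.log_neg hρ0 hρ1
  have h2N : (0:ℝ) < 2*(N:ℝ) := by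
    have : (0:ℝ) < (N:ℝ) := by exact_mod_cast (by omega : 0 < N)
    linarith
  set c := L / (2*(N:ℝ)) with hc
  have hcneg : c < 0 := div_neg_of_neg_of_pos hLneg h2N
  have hosc0 : 0 ≤ MN n₀ - mN n₀ := by
    have := hoscnn n₀ (by omega)
    linarith
  set C := (MN n₀ - mN n₀) * Real.exp (-(c * ((n₀:ℝ) + 2*N))) with hCdef
  have hCnn : 0 ≤ C := by
    rw [hCdef]
    positivity
  refine ⟨α, hαpos, c, C, hcneg, hCnn, n₀, ?_⟩
  intro n hn
  have hd := hdist n hn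
  set s := (n - n₀)/(2*N) with hs
  -- ρ^s ≤ exp (c*(n - n₀ - 2N))
  have hP : 2*N*s + (n-n₀) % (2*N) = n - n₀ := by
    rw [hs]
    exact Nat.div_add_mod (n - n₀) (2*N)
  have hr := Nat.mod_lt (n-n₀) (show 0 < 2*N by omega)
  have hnat : n - n₀ < 2*N*s + 2*N := by
    rw [← hP]
    exact Nat.add_lt_add_left hr _
  have hc1 : ((n - n₀ : ℕ):ℝ) = (n:ℝ) - (n₀:ℝ) := by
    rw [Nat.cast_sub hn]
  have hcast : (n:ℝ) - n₀ < 2*N*s + 2*N := by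
    have h := (Nat.cast_lt (α := ℝ)).mpr hnat
    rw [hc1] at h
    push_cast at h
    convert h using 2 <;> push_cast <;> ring
  have hA : (n:ℝ) - n₀ - 2*N ≤ 2*(N:ℝ)*(s:ℝ) := by linarith
  have hkey2 : (s:ℝ)*L ≤ c * ((n:ℝ) - n₀ - 2*N) := by
    rw [hc, div_mul_eq_mul_div, le_div_iff₀ h2N]
    nlinarith [mul_le_mul_of_nonneg_right hA (neg_nonneg.mpr (le_of_lt hLneg))]
  have hρs : ρ^s ≤ Real.exp (c * ((n:ℝ) - n₀ - 2*N)) := by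
    have h1 : ρ^s = Real.exp ((s:ℝ)*L) := by
      rw [hL, Real.exp_nat_mul, Real.exp_log hρ0]
    rw [h1]
    exact Real.exp_le_exp.mpr hkey2
  have hfin : ρ^s * (MN n₀ - mN n₀) ≤ C * Real.exp (c * n) := by
    have h1 : ρ^s * (MN n₀ - mN n₀) ≤ Real.exp (c * ((n:ℝ) - n₀ - 2*N)) * (MN n₀ - mN n₀) :=
      mul_le_mul_of_nonneg_right hρs hosc0
    have h2 : Real.exp (c * ((n:ℝ) - n₀ - 2*N)) * (MN n₀ - mN n₀) = C * Real.exp (c * n) := by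
      rw [hCdef, show c * ((n:ℝ) - n₀ - 2*N) = c * n + (-(c * ((n₀:ℝ) + 2*N))) by ring,
        Real.exp_add]
      ring
    linarith
  exact le_trans hd hfin

end Binet

end ZeckAux

namespace ZeckAux

open Zeck Filter Asymptotics

lemma tendsto_of_binet {H : ℕ → ℕ} {φ a c C : ℝ} (hc : c < 0) (n₀ : ℕ)
    (hbd : ∀ n, n₀ ≤ n → |(H n:ℝ)*(φ⁻¹)^n - a| ≤ C * Real.exp (c*n)) :
    Filter.Tendsto (fun n : ℕ => (H n:ℝ)*(φ⁻¹)^n) atTop (nhds a) := by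
  have h1 : ∀ᶠ n : ℕ in atTop, ‖(H n:ℝ)*(φ⁻¹)^n - a‖ ≤ C * Real.exp (c*n) := by
    filter_upwards [eventually_ge_atTop n₀] with n hn
    rw [Real.norm_eq_abs]
    exact hbd n hn
  have h2 : Filter.Tendsto (fun n : ℕ => C * Real.exp (c*(n:ℝ))) atTop (nhds (C * 0)) := by
    apply Filter.Tendsto.const_mul
    have hform : (fun n : ℕ => Real.exp (c*(n:ℝ))) = fun n : ℕ => (Real.exp c)^n := by
      funext n
      rw [← Real.exp_nat_mul]
      congr 1
      ring
    rw [hform]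
    apply tendsto_pow_atTop_nhds_zero_of_lt_one (le_of_lt (Real.exp_pos c))
    rw [← Real.exp_zero]
    exact Real.exp_lt_exp.mpr hc
  rw [mul_zero] at h2
  have h3 := squeeze_zero_norm' h1 h2
  have h4 := h3.add (tendsto_const_nhds (x := a))
  simpa using h4

lemma bigO_of_binet {H : ℕ → ℕ} {φ a c C : ℝ} (hφ : 1 < φ) (hc : c < 0) (hC : 0 ≤ C) (n₀ : ℕ)
    (hbd : ∀ n, n₀ ≤ n → |(H n:ℝ)*(φ⁻¹)^n - a| ≤ C * Real.exp (c*n))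
    {r : ℝ} (hr : 1 + c / Real.log φ ≤ r) :
    (fun n : ℕ => (H n : ℝ) - (a*φ) * φ^(n-1)) =O[atTop] (fun n : ℕ => φ ^ (r * (n:ℝ))) := by
  have hφpos : (0:ℝ) < φ := lt_trans one_pos hφ
  have hlog : 0 < Real.log φ := Real.log_pos hφ
  apply Asymptotics.isBigO_iff.mpr
  refine ⟨C, ?_⟩
  filter_upwards [eventually_ge_atTop (max n₀ 1)] with n hn
  have hn₀ : n₀ ≤ n := le_trans (le_max_left _ _) hn
  have hn1 : 1 ≤ n := le_trans (le_max_right _ _) hn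
  have hpowsplit : φ^(n-1) * φ = φ^n := by
    rw [← pow_succ]
    congr 1
    omega
  have hinvpow : (φ⁻¹)^n * φ^n = 1 := by
    rw [← mul_pow, inv_mul_cancel₀ (ne_of_gt hφpos), one_pow]
  have key : (H n:ℝ) - (a*φ) * φ^(n-1) = ((H n:ℝ)*(φ⁻¹)^n - a) * φ^n := by
    calc (H n:ℝ) - (a*φ) * φ^(n-1)
        = (H n:ℝ) * ((φ⁻¹)^n * φ^n) - a * (φ^(n-1) * φ) := by rw [hinvpow, mul_one]; ring
      _ = ((H n:ℝ)*(φ⁻¹)^n - a) * φ^n := by rw [hpowsplit]; ring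
  have hφn : φ^n = Real.exp ((n:ℝ) * Real.log φ) := by
    rw [Real.exp_nat_mul, Real.exp_log hφpos]
  have hrpow : φ ^ (r * (n:ℝ)) = Real.exp (r * (n:ℝ) * Real.log φ) := by
    rw [Real.rpow_def_of_pos hφpos]
    congr 1
    ring
  have hexp_le : Real.exp (c*(n:ℝ)) * φ^n ≤ φ ^ (r * (n:ℝ)) := by
    rw [hφn, hrpow, ← Real.exp_add]
    apply Real.exp_le_exp.mpr
    have h1 : (1 + c / Real.log φ) * ((n:ℝ) * Real.log φ) ≤ r * ((n:ℝ) * Real.log φ) := by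
      apply mul_le_mul_of_nonneg_right hr
      positivity
    have h2 : (1 + c / Real.log φ) * ((n:ℝ) * Real.log φ)
        = c*(n:ℝ) + (n:ℝ) * Real.log φ := by
      field_simp
      ring
    calc c*(n:ℝ) + (n:ℝ) * Real.log φ = (1 + c / Real.log φ) * ((n:ℝ) * Real.log φ) := h2.symm
      _ ≤ r * ((n:ℝ) * Real.log φ) := h1
      _ = r * (n:ℝ) * Real.log φ := by ring
  rw [key]
  rw [Real.norm_eq_abs, Real.norm_eq_abs, abs_mul]
  have hb := hbd n hn₀
  have hφnpos : (0:ℝ) < φ^n := by positivity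
  have hrppos : (0:ℝ) < φ ^ (r * (n:ℝ)) := Real.rpow_pos_of_pos hφpos _
  rw [abs_of_pos hφnpos, abs_of_pos hrppos]
  calc |(H n:ℝ)*(φ⁻¹)^n - a| * φ^n ≤ (C * Real.exp (c*n)) * φ^n :=
        mul_le_mul_of_nonneg_right hb (le_of_lt hφnpos)
    _ = C * (Real.exp (c*n) * φ^n) := by ring
    _ ≤ C * (φ ^ (r * (n:ℝ))) := mul_le_mul_of_nonneg_left hexp_le hC

end ZeckAux

/-- If `E ⊊ Ẽ` then `φ < φ̃`; Binet-type asymptotics for the fundamental sequences, and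
`H_n/(H̃_n)^γ → α/α̃^γ > 0` where `γ = ln φ / ln φ̃ ∈ (0,1)`. -/
theorem ratios_of_fundamental_sequences (N M : ℕ) (e et : ℕ → ℕ)
    (hN : 2 ≤ N) (hM : 2 ≤ M) (he : 1 ≤ e 1) (het : 1 ≤ et 1)
    (hsub : {μ | memColl N e μ} ⊂ {μ | memColl M et μ})
    (H Ht : ℕ → ℕ) (hH1 : H 1 = 1)
    (hHrec : ∀ n, 2 ≤ n → H n = 1 + ∑ k ∈ Finset.Ico 1 n, maxBlock N e n k * H k)
    (hHt1 : Ht 1 = 1)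
    (hHtrec : ∀ n, 2 ≤ n → Ht n = 1 + ∑ k ∈ Finset.Ico 1 n, maxBlock M et n k * Ht k)
    (φ φt : ℝ) (hφ : 1 < φ) (hφroot : fchar N e φ = 0)
    (hφt : 1 < φt) (hφtroot : fchar M et φt = 0)
    (γ : ℝ) (hγ : γ = Real.log φ / Real.log φt) :
    φ < φt ∧ 0 < γ ∧ γ < 1 ∧
    ∃ α : ℝ, 0 < α ∧ ∃ αt : ℝ, 0 < αt ∧ ∃ r : ℝ, r < 1 ∧
      ((fun n : ℕ => (H n : ℝ) - α * φ ^ (n - 1)) =O[atTop]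
        (fun n : ℕ => φ ^ (r * (n : ℝ)))) ∧
      ((fun n : ℕ => (Ht n : ℝ) - αt * φt ^ (n - 1)) =O[atTop]
        (fun n : ℕ => φt ^ (r * (n : ℝ)))) ∧
      Filter.Tendsto (fun n : ℕ => (H n : ℝ) / (Ht n : ℝ) ^ γ) Filter.atTop
        (nhds (α / αt ^ γ)) ∧
      0 < α / αt ^ γ := by
  classical
  have hφpos : (0:ℝ) < φ := lt_trans one_pos hφ
  have hφtpos : (0:ℝ) < φt := lt_trans one_pos hφt
  have hlt : φ < φt := ZeckAux.phi_lt hN hM he het hsub hφ hφroot hφt hφtroot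
  have hlogφ : 0 < Real.log φ := Real.log_pos hφ
  have hlogφt : 0 < Real.log φt := Real.log_pos hφt
  have hγpos : 0 < γ := by rw [hγ]; positivity
  have hγ1 : γ < 1 := by
    rw [hγ, div_lt_one hlogφt]
    exact Real.log_lt_log hφpos hlt
  obtain ⟨a, hapos, c, C, hcneg, hCnn, n₀, hbd⟩ := ZeckAux.binet hN he hH1 hHrec hφ hφroot
  obtain ⟨b, hbpos, ct, Ct, hctneg, hCtnn, nt₀, hbdt⟩ :=
    ZeckAux.binet hM het hHt1 hHtrec hφt hφtroot
  set r := max (1 + c / Real.log φ) (1 + ct / Real.log φt) with hrdef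
  have hr1 : r < 1 := by
    apply max_lt
    · have : c / Real.log φ < 0 := div_neg_of_neg_of_pos hcneg hlogφ
      linarith
    · have : ct / Real.log φt < 0 := div_neg_of_neg_of_pos hctneg hlogφt
      linarith
  have hφtγ : φt ^ γ = φ := by
    rw [hγ, Real.rpow_def_of_pos hφtpos,
      show Real.log φt * (Real.log φ / Real.log φt) = Real.log φ by
        field_simp]
    exact Real.exp_log hφpos
  have hpowγ : ∀ n : ℕ, ((φt ^ n : ℝ)) ^ γ = φ ^ n := by
    intro n
    rw [← Real.rpow_natCast φt n, ← Real.rpow_mul (le_of_lt hφtpos), mul_comm,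
      Real.rpow_mul (le_of_lt hφtpos), hφtγ, Real.rpow_natCast]
  have hTH := ZeckAux.tendsto_of_binet hcneg n₀ hbd
  have hTHt := ZeckAux.tendsto_of_binet hctneg nt₀ hbdt
  have hTHtγ : Filter.Tendsto (fun n : ℕ => ((Ht n:ℝ)*(φt⁻¹)^n) ^ γ) atTop (nhds (b ^ γ)) :=
    hTHt.rpow_const (Or.inl (ne_of_gt hbpos))
  have hbγpos : 0 < b ^ γ := Real.rpow_pos_of_pos hbpos γ
  have hdiv := hTH.div hTHtγ (ne_of_gt hbγpos)
  have hratio : ∀ n : ℕ, 1 ≤ n →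
      ((H n:ℝ)*(φ⁻¹)^n) / (((Ht n:ℝ)*(φt⁻¹)^n)^γ) = (H n:ℝ)/(Ht n:ℝ)^γ := by
    intro n hn
    have hHtpos : (0:ℝ) < (Ht n : ℝ) := by
      have := ZeckAux.H_ge_one hHt1 hHtrec n hn
      exact_mod_cast Nat.lt_of_lt_of_le Nat.zero_lt_one this
    have h1 : ((Ht n:ℝ)*(φt⁻¹)^n)^γ = (Ht n:ℝ)^γ * ((φ:ℝ)^n)⁻¹ := by
      rw [Real.mul_rpow (le_of_lt hHtpos) (by positivity)]
      congr 1
      rw [inv_pow, Real.inv_rpow (by positivity), hpowγ n]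
    rw [h1]
    have hφn : (φ:ℝ)^n ≠ 0 := by positivity
    have hHtγ : (Ht n:ℝ)^γ ≠ 0 := ne_of_gt (Real.rpow_pos_of_pos hHtpos γ)
    field_simp
    rw [one_div, inv_pow, mul_assoc, inv_mul_cancel₀ hφn, mul_one]
  have heq' : (fun n : ℕ => ((H n:ℝ)*(φ⁻¹)^n) / (((Ht n:ℝ)*(φt⁻¹)^n)^γ))
      =ᶠ[atTop] (fun n : ℕ => (H n:ℝ)/(Ht n:ℝ)^γ) := by
    filter_upwards [eventually_ge_atTop 1] with n hn
    exact hratio n hn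
  have hTend := hdiv.congr' heq'
  have hval : a / b^γ = (a*φ) / ((b*φt)^γ) := by
    rw [Real.mul_rpow (le_of_lt hbpos) (le_of_lt hφtpos), hφtγ,
      mul_div_mul_right _ _ (ne_of_gt hφpos)]
  refine ⟨hlt, hγpos, hγ1, a*φ, by positivity, b*φt, by positivity, r, hr1, ?_, ?_, ?_, ?_⟩
  · exact ZeckAux.bigO_of_binet hφ hcneg hCnn n₀ hbd (le_max_left _ _)
  · exact ZeckAux.bigO_of_binet hφt hctneg hCtnn nt₀ hbdt (le_max_right _ _)
  · rw [← hval]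
    exact hTend
  · rw [← hval]
    positivity
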